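/- Let $\mathcal{B}$ be a Banach space of real-valued functions on a set $\mathcal{X}$ (with pointwise operations) such that for every $x \in \mathcal{X}$ the evaluation functional $f \mapsto f(x)$ is bounded. Then there exist a Banach space $\mathcal{F}$ and a map $\phi : \mathcal{X} \to \mathcal{F}'$ such that $\mathcal{B} = \{ f_\mu : \mu \in \mathcal{F} \}$ where $f_\mu(x) = \langle \phi(x), \mu \rangle$, and $\|f\|_{\mathcal{B}} = \inf\{ \|\mu\|_{\mathcal{F}} : \mu \in \mathcal{F}, f = f_\mu \}$. Conversely, given any Banach space $\mathcal{F}$ and map $\phi : \mathcal{X} \to \mathcal{F}'$, the space of functions $f_\mu$ with the quotient norm is a Banach space of functions on which point evaluations are bounded. -/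

import Mathlib

/-- A Banach space of real-valued functions on a set `X` (with pointwise
operations, modelled by an injective linear map `ev : B →ₗ[ℝ] (X → ℝ)`) on which all point
evaluations are bounded admits a feature-map representation: there exist a Banach space `F` and
`φ : X → F'` such that `B = {f_μ : μ ∈ F}` with `f_μ x = ⟨φ x, μ⟩` and
`‖f‖_B = inf {‖μ‖ : f_μ = f}`.  Conversely, any Banach space `F` and map `φ : X → F'` give rise
to such a Banach space of functions with bounded point evaluations. -/
theorem stmt_0 :
    (∀ (X B : Type) [inst1 : NormedAddCommGroup B] [inst2 : NormedSpace ℝ B]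
        [inst3 : CompleteSpace B] (ev : B →ₗ[ℝ] (X → ℝ)),
      Function.Injective ev →
      (∀ x : X, ∃ C : ℝ, 0 < C ∧ ∀ f : B, |ev f x| ≤ C * ‖f‖) →
      ∃ (F : Type) (_ : NormedAddCommGroup F) (_ : NormedSpace ℝ F) (_ : CompleteSpace F)
        (φ : X → (F →L[ℝ] ℝ)),
        (∀ g : X → ℝ, (∃ f : B, ev f = g) ↔ (∃ μ : F, ∀ x, φ x μ = g x)) ∧
        (∀ f : B, ‖f‖ = sInf {c : ℝ | ∃ μ : F, (∀ x, φ x μ = ev f x) ∧ ‖μ‖ = c}))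
    ∧
    (∀ (X F : Type) [instF1 : NormedAddCommGroup F] [instF2 : NormedSpace ℝ F]
        [instF3 : CompleteSpace F] (φ : X → (F →L[ℝ] ℝ)),
      ∃ (B : Type) (_ : NormedAddCommGroup B) (_ : NormedSpace ℝ B) (_ : CompleteSpace B)
        (ev : B →ₗ[ℝ] (X → ℝ)),
        Function.Injective ev ∧
        (∀ g : X → ℝ, (∃ f : B, ev f = g) ↔ (∃ μ : F, ∀ x, φ x μ = g x)) ∧
        (∀ f : B, ‖f‖ = sInf {c : ℝ | ∃ μ : F, (∀ x, φ x μ = ev f x) ∧ ‖μ‖ = c}) ∧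
        (∀ x : X, ∃ C : ℝ, 0 < C ∧ ∀ f : B, |ev f x| ≤ C * ‖f‖)) := by
  constructor
  · intro X B _ _ _ ev hinj hbd
    refine ⟨B, ‹_›, ‹_›, ‹_›,
      fun x => LinearMap.mkContinuous ((LinearMap.proj x).comp ev)
        (Classical.choose (hbd x)) (fun f => ?_), ?_, ?_⟩
    · simpa [Real.norm_eq_abs] using (Classical.choose_spec (hbd x)).2 f
    · intro g
      constructor
      · rintro ⟨f, rfl⟩; exact ⟨f, fun x => rfl⟩
      · rintro ⟨μ, hμ⟩; exact ⟨μ, funext hμ⟩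
    · intro f
      have hset : {c : ℝ | ∃ μ : B, (∀ x, (LinearMap.mkContinuous ((LinearMap.proj x).comp ev)
          (Classical.choose (hbd x)) (fun f => by
            simpa [Real.norm_eq_abs] using (Classical.choose_spec (hbd x)).2 f)) μ = ev f x)
          ∧ ‖μ‖ = c} = {‖f‖} := by
        ext c
        simp only [Set.mem_setOf_eq, Set.mem_singleton_iff]
        constructor
        · rintro ⟨μ, hμ, rfl⟩
          have : ev μ = ev f := funext fun x => hμ x
          rw [hinj this]
        · rintro rfl
          exact ⟨f, fun x => rfl, rfl⟩
      rw [hset, csInf_singleton]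
  · intro X F _ _ _ φ
    set T : F →ₗ[ℝ] (X → ℝ) := LinearMap.pi (fun x => (φ x : F →ₗ[ℝ] ℝ)) with hT
    set K : Submodule ℝ F := LinearMap.ker T with hKdef
    have hK : IsClosed (K : Set F) := by
      have : (K : Set F) = ⋂ x, (φ x) ⁻¹' {(0 : ℝ)} := by
        ext μ
        simp [hKdef, hT, LinearMap.mem_ker, funext_iff, Set.mem_iInter, LinearMap.pi_apply]
      rw [this]
      exact isClosed_iInter fun x => isClosed_singleton.preimage (φ x).continuous
    haveI : IsClosed ((K : Submodule ℝ F) : Set F) := hK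
    refine ⟨F ⧸ K, inferInstance, inferInstance, inferInstance,
      K.liftQ T le_rfl, ?_, ?_, ?_, ?_⟩
    · rw [← LinearMap.ker_eq_bot, Submodule.ker_liftQ_eq_bot]
      exact le_rfl
    · intro g
      constructor
      · rintro ⟨f, rfl⟩
        obtain ⟨μ, rfl⟩ := Submodule.Quotient.mk_surjective K f
        exact ⟨μ, fun x => rfl⟩
      · rintro ⟨μ, hμ⟩
        exact ⟨Submodule.Quotient.mk μ, funext hμ⟩
    · intro f
      obtain ⟨ν, rfl⟩ := Submodule.Quotient.mk_surjective K f
      have hev : ∀ μ : F, Submodule.Quotient.mk (p := K) μ = Submodule.Quotient.mk ν ↔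
          (∀ x, φ x μ = K.liftQ T le_rfl (Submodule.Quotient.mk ν) x) := by
        intro μ
        rw [Submodule.Quotient.eq]
        constructor
        · intro h x
          have : T (μ - ν) = 0 := h
          have := congrFun this x
          simp only [hT, LinearMap.pi_apply, map_sub, Pi.sub_apply, Pi.zero_apply,
            ContinuousLinearMap.coe_coe, sub_eq_zero] at this
          simpa [hT, LinearMap.pi_apply] using this
        · intro h
          show μ - ν ∈ LinearMap.ker T
          rw [LinearMap.mem_ker]
          funext x
          have := h x
          simp only [hT, LinearMap.pi_apply, map_sub, Pi.sub_apply, Pi.zero_apply,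
            ContinuousLinearMap.coe_coe]
          simp only [Submodule.liftQ_apply, hT, LinearMap.pi_apply,
            ContinuousLinearMap.coe_coe] at this
          rw [sub_eq_zero]
          exact this
      have hSne : (∃ c, c ∈ {c : ℝ | ∃ μ : F, (∀ x, φ x μ = K.liftQ T le_rfl
          (Submodule.Quotient.mk ν) x) ∧ ‖μ‖ = c}) :=
        ⟨‖ν‖, ν, (hev ν).mp rfl, rfl⟩
      have hbdd : BddBelow {c : ℝ | ∃ μ : F, (∀ x, φ x μ = K.liftQ T le_rfl
          (Submodule.Quotient.mk ν) x) ∧ ‖μ‖ = c} := by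
        refine ⟨0, ?_⟩
        rintro c ⟨μ, _, rfl⟩
        exact norm_nonneg μ
      refine le_antisymm ?_ ?_
      · refine le_csInf hSne ?_
        rintro c ⟨μ, hμ, rfl⟩
        have : Submodule.Quotient.mk (p := K) μ = Submodule.Quotient.mk ν := (hev μ).mpr hμ
        calc ‖Submodule.Quotient.mk (p := K) ν‖ = ‖Submodule.Quotient.mk (p := K) μ‖ := by
              rw [this]
          _ ≤ ‖μ‖ := Submodule.Quotient.norm_mk_le K μ
      · refine le_of_forall_pos_le_add fun ε hε => ?_
        obtain ⟨μ, hμeq, hμlt⟩ := Submodule.Quotient.norm_mk_lt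
          (Submodule.Quotient.mk (p := K) ν) hε
        have hmem : ‖μ‖ ∈ {c : ℝ | ∃ m : F, (∀ x, φ x m = K.liftQ T le_rfl
            (Submodule.Quotient.mk ν) x) ∧ ‖m‖ = c} :=
          ⟨μ, (hev μ).mp hμeq, rfl⟩
        exact (csInf_le hbdd hmem).trans hμlt.le
    · intro x
      refine ⟨‖φ x‖ + 1, by positivity, fun f => ?_⟩
      obtain ⟨ν, rfl⟩ := Submodule.Quotient.mk_surjective K f
      have key : |K.liftQ T le_rfl (Submodule.Quotient.mk ν) x| ≤
          ‖φ x‖ * ‖Submodule.Quotient.mk (p := K) ν‖ := by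
        refine le_of_forall_pos_le_add fun ε hε => ?_
        have hδ : (0 : ℝ) < ε / (‖φ x‖ + 1) := by positivity
        obtain ⟨μ, hμeq, hμlt⟩ := Submodule.Quotient.norm_mk_lt
          (Submodule.Quotient.mk (p := K) ν) hδ
        have h1 : K.liftQ T le_rfl (Submodule.Quotient.mk ν) x = φ x μ := by
          rw [← hμeq]
          simp [hT, LinearMap.pi_apply]
        rw [h1]
        have h2 : |φ x μ| ≤ ‖φ x‖ * ‖μ‖ := by
          simpa [Real.norm_eq_abs] using (φ x).le_opNorm μ
        have h3 : ‖φ x‖ * ‖μ‖ ≤ ‖φ x‖ * (‖Submodule.Quotient.mk (p := K) ν‖ + ε / (‖φ x‖ + 1)) :=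
          mul_le_mul_of_nonneg_left hμlt.le (norm_nonneg _)
        have h4 : ‖φ x‖ * (ε / (‖φ x‖ + 1)) ≤ ε := by
          rw [mul_div_assoc'] at *
          rw [div_le_iff₀ (by positivity)]
          nlinarith [norm_nonneg (φ x), hε.le]
        nlinarith [norm_nonneg (φ x)]
      have : ‖φ x‖ * ‖Submodule.Quotient.mk (p := K) ν‖ ≤
          (‖φ x‖ + 1) * ‖Submodule.Quotient.mk (p := K) ν‖ :=
        mul_le_mul_of_nonneg_right (by linarith) (norm_nonneg _)
      exact key.trans this
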